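/- For the truncated Bruggeman functional equation in dimension d: if ξ solves 1/ξ = 1 + d Σ_{n=2}^∞ (-1)ⁿ m_n/(1+δξ)ⁿ with δ = d-1 and moments m_n = E[uⁿ], then the expansion of ξ up to third-order moments is ξ = 1 - m₂/d + m₃/d² + O(|u|⁴); in particular the map G(ξ) = (1 + d Σ (-1)ⁿ m_n/(1+δξ)ⁿ)⁻¹ satisfies G(1) = 1 - m₂/d + m₃/d² + O(|u|⁴) when |u| ≤ ε. -/

import Mathlib

open MeasureTheory

lemma bruggeman_inv_est (A t ε : ℝ) (hε0 : 0 ≤ ε) (hε2 : ε^2 ≤ 1/4)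
    (h1 : |A - t| ≤ ε^4/6) (h2 : |A| ≤ 2/3 * ε^2) :
    |(1 + A)⁻¹ - (1 - t)| ≤ ε^4 := by
  have habs := abs_le.mp h2
  have habs1 := abs_le.mp h1
  have hAsmall : |A| ≤ 1/6 := by nlinarith [habs.1, habs.2, abs_nonneg A]
  have hApos : (5:ℝ)/6 ≤ 1 + A := by
    have := abs_le.mp hAsmall
    linarith [this.1]
  have hApos' : (0:ℝ) < 1 + A := by linarith
  have he : (1 + A)⁻¹ - (1 - A) = A^2 / (1 + A) := by
    field_simp
    ring
  have hA2 : A^2 ≤ (2/3 * ε^2)^2 := by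
    nlinarith [abs_nonneg A, sq_abs A, habs.1, habs.2]
  have h3 : |(1 + A)⁻¹ - (1 - A)| ≤ (8:ℝ)/15 * ε^4 := by
    rw [he, abs_div, abs_of_pos hApos', abs_of_nonneg (sq_nonneg A)]
    calc A^2 / (1 + A) ≤ (2/3 * ε^2)^2 / (5/6) := by
          apply div_le_div₀ (by positivity) hA2 (by norm_num) hApos
      _ = 8/15 * (ε^2)^2 := by ring
      _ = 8/15 * ε^4 := by ring
  calc |(1 + A)⁻¹ - (1 - t)|
      ≤ |(1 + A)⁻¹ - (1 - A)| + |(1 - A) - (1 - t)| := abs_sub_le _ _ _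
    _ ≤ 8/15 * ε^4 + ε^4/6 := by
        apply add_le_add h3
        have : (1 - A) - (1 - t) = -(A - t) := by ring
        rw [this, abs_neg]
        exact h1
    _ ≤ ε^4 := by nlinarith [pow_nonneg hε0 4]

lemma bruggeman_aux (d : ℕ) (hd : 2 ≤ d) (ε : ℝ) (hε0 : 0 ≤ ε) (hε : ε < 1/2)
    (m : ℕ → ℝ) (hm : ∀ n, |m n| ≤ ε ^ n) :
    |(1 + d * ∑' n : ℕ, (-1:ℝ)^(n+2) * m (n+2) / (d:ℝ)^(n+2))⁻¹ -
      (1 - m 2 / d + m 3 / (d:ℝ)^2)| ≤ ε ^ 4 := by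
  have hd2 : (2:ℝ) ≤ d := by exact_mod_cast hd
  have hdpos : (0:ℝ) < d := by linarith
  have hd0 : (d:ℝ) ≠ 0 := hdpos.ne'
  set r : ℝ := ε / d with hrdef
  have hr0 : 0 ≤ r := div_nonneg hε0 hdpos.le
  have hrlt : r < 1/4 := by
    have h1 : ε / (d:ℝ) ≤ ε / 2 := div_le_div_of_nonneg_left hε0 two_pos hd2
    have h2 : ε / 2 < 1/4 := by linarith
    calc r ≤ ε / 2 := h1
      _ < 1/4 := h2
  have hr1 : r < 1 := by linarith
  set a : ℕ → ℝ := fun n => (-1:ℝ)^(n+2) * m (n+2) / (d:ℝ)^(n+2) with hadef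
  have ha : ∀ n, |a n| ≤ r ^ (n+2) := by
    intro n
    have h : |a n| = |m (n+2)| / (d:ℝ)^(n+2) := by
      rw [hadef]
      simp only [abs_div, abs_mul, abs_pow, abs_neg, abs_one, one_pow, one_mul,
        abs_of_pos hdpos]
    rw [h, hrdef, div_pow]
    gcongr
    exact hm _
  -- geometric facts
  have hgeo : Summable (fun n : ℕ => r ^ n) := summable_geometric_of_lt_one hr0 hr1
  have hgeok : ∀ k : ℕ, Summable (fun n : ℕ => r ^ (n + k)) := by
    intro k
    simpa only [pow_add] using hgeo.mul_right (r ^ k)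
  have hgeosum : ∀ k : ℕ, ∑' n : ℕ, r ^ (n + k) = (1 - r)⁻¹ * r ^ k := by
    intro k
    simp only [pow_add]
    rw [tsum_mul_right, tsum_geometric_of_lt_one hr0 hr1]
  have hsum : Summable a := by
    apply Summable.of_norm_bounded (hgeok 2)
    intro n
    simpa using ha n
  have hsum2 : Summable (fun n => a (n + 2)) := (summable_nat_add_iff 2).mpr hsum
  -- tail bound
  have htail : |∑' n : ℕ, a (n + 2)| ≤ (1 - r)⁻¹ * r ^ 4 := by
    calc |∑' n : ℕ, a (n + 2)| ≤ ∑' n : ℕ, |a (n + 2)| := by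
          simpa using norm_tsum_le_tsum_norm (f := fun n => a (n+2)) (by simpa using hsum2.abs)
      _ ≤ ∑' n : ℕ, r ^ (n + 4) := by
          apply Summable.tsum_le_tsum _ hsum2.abs (hgeok 4)
          intro n
          simpa [add_assoc] using ha (n + 2)
      _ = (1 - r)⁻¹ * r ^ 4 := hgeosum 4
  -- whole sum bound
  have hwhole : |∑' n : ℕ, a n| ≤ (1 - r)⁻¹ * r ^ 2 := by
    calc |∑' n : ℕ, a n| ≤ ∑' n : ℕ, |a n| := by
          simpa using norm_tsum_le_tsum_norm (f := a) (by simpa using hsum.abs)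
      _ ≤ ∑' n : ℕ, r ^ (n + 2) := Summable.tsum_le_tsum ha hsum.abs (hgeok 2)
      _ = (1 - r)⁻¹ * r ^ 2 := hgeosum 2
  -- split off first two terms
  have hsplit : ∑' n : ℕ, a n = a 0 + a 1 + ∑' n : ℕ, a (n + 2) := by
    rw [← Summable.sum_add_tsum_nat_add 2 hsum]
    rw [Finset.sum_range_succ, Finset.sum_range_one]
  have hinvr : (1 - r)⁻¹ ≤ 4/3 := by
    rw [inv_le_comm₀ (by linarith) (by norm_num)]
    linarith
  have hinvr0 : 0 ≤ (1 - r)⁻¹ := inv_nonneg.mpr (by linarith)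
  set A : ℝ := (d:ℝ) * ∑' n : ℕ, a n with hAdef
  have ha0 : a 0 = m 2 / (d:ℝ)^2 := by simp [hadef]
  have ha1 : a 1 = -(m 3 / (d:ℝ)^3) := by
    simp only [hadef]
    norm_num
    ring
  have hd3 : (8:ℝ) ≤ (d:ℝ)^3 := by
    calc (8:ℝ) = 2^3 := by norm_num
      _ ≤ (d:ℝ)^3 := by gcongr
  have hdr4 : (d:ℝ) * r^4 ≤ ε^4/8 := by
    have he : (d:ℝ) * r^4 = ε^4 / (d:ℝ)^3 := by
      rw [hrdef, div_pow]
      field_simp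
    rw [he]
    gcongr
  have hdr2 : (d:ℝ) * r^2 ≤ ε^2/2 := by
    have he : (d:ℝ) * r^2 = ε^2 / (d:ℝ) := by
      rw [hrdef, div_pow]
      field_simp
    rw [he]
    exact div_le_div_of_nonneg_left (by positivity) two_pos hd2
  have h1 : |A - (m 2 / d - m 3 / (d:ℝ)^2)| ≤ ε^4 / 6 := by
    have he : A - (m 2 / d - m 3 / (d:ℝ)^2) = (d:ℝ) * ∑' n : ℕ, a (n + 2) := by
      rw [hAdef, hsplit, ha0, ha1]
      field_simp
      ring
    rw [he, abs_mul, abs_of_pos hdpos]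
    calc (d:ℝ) * |∑' n : ℕ, a (n + 2)| ≤ (d:ℝ) * ((1 - r)⁻¹ * r ^ 4) := by gcongr
      _ = (1 - r)⁻¹ * ((d:ℝ) * r ^ 4) := by ring
      _ ≤ (4/3) * (ε^4/8) := by
          apply mul_le_mul hinvr hdr4 (by positivity) (by norm_num)
      _ = ε^4 / 6 := by ring
  have h2 : |A| ≤ 2/3 * ε^2 := by
    rw [hAdef, abs_mul, abs_of_pos hdpos]
    calc (d:ℝ) * |∑' n : ℕ, a n| ≤ (d:ℝ) * ((1 - r)⁻¹ * r ^ 2) := by gcongr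
      _ = (1 - r)⁻¹ * ((d:ℝ) * r ^ 2) := by ring
      _ ≤ (4/3) * (ε^2/2) := by
          apply mul_le_mul hinvr hdr2 (by positivity) (by norm_num)
      _ = 2/3 * ε^2 := by ring
  have hε2 : ε^2 ≤ 1/4 := by nlinarith
  have hgoal := bruggeman_inv_est A (m 2 / d - m 3 / (d:ℝ)^2) ε hε0 hε2 h1 h2
  have hrw : (1:ℝ) - m 2 / d + m 3 / (d:ℝ)^2 = 1 - (m 2 / d - m 3 / (d:ℝ)^2) := by ring
  rw [hrw]
  exact hgoal

/-- Third-order expansion of the Bruggeman map: with `δ = d - 1`, `u` a random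
variable with `|u| ≤ ε < 1/2` a.s. and `E[u] = 0`, the map
`G(ξ) = (1 + d Σ_{n=2}^∞ (-1)ⁿ E[uⁿ]/(1+δξ)ⁿ)⁻¹` satisfies
`|G(1) - (1 - E[u²]/d + E[u³]/d²)| ≤ C(d) ε⁴` for a constant `C(d) > 0`. -/
theorem bruggeman_third_order_expansion (d : ℕ) (hd : 2 ≤ d) :
    ∃ C : ℝ, 0 < C ∧
      ∀ {Ω : Type} [MeasurableSpace Ω] (μ : Measure Ω), IsProbabilityMeasure μ →
      ∀ (u : Ω → ℝ), Measurable u →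
      ∀ ε : ℝ, 0 ≤ ε → ε < 1 / 2 →
      (∀ ω, |u ω| ≤ ε) →
      (∫ ω, u ω ∂μ) = 0 →
      |(1 + d * ∑' n : ℕ,
            (-1 : ℝ) ^ (n + 2) * (∫ ω, u ω ^ (n + 2) ∂μ) /
              (1 + (d - 1 : ℝ) * 1) ^ (n + 2))⁻¹ -
          (1 - (∫ ω, u ω ^ 2 ∂μ) / d + (∫ ω, u ω ^ 3 ∂μ) / (d : ℝ) ^ 2)| ≤
        C * ε ^ 4 := by
  refine ⟨1, one_pos, ?_⟩
  intro Ω _ μ hμ u hu ε hε0 hε hub hmean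
  haveI := hμ
  have hbase : (1 + ((d:ℝ) - 1) * 1) = (d:ℝ) := by ring
  rw [hbase, one_mul]
  set m : ℕ → ℝ := fun n => ∫ ω, u ω ^ n ∂μ with hmdef
  have hm : ∀ n, |m n| ≤ ε ^ n := by
    intro n
    have h := norm_integral_le_of_norm_le_const (μ := μ) (f := fun ω => u ω ^ n)
      (C := ε ^ n) (Filter.Eventually.of_forall fun ω => by
        rw [Real.norm_eq_abs, abs_pow]
        exact pow_le_pow_left₀ (abs_nonneg _) (hub ω) n)
    simpa [hmdef, Real.norm_eq_abs, measure_univ] using h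
  exact bruggeman_aux d hd ε hε0 hε m hm
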